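/- arXiv:2006.11251 — 3 statements merged into one kernel-verified Lean document; each statement's English description precedes it below -/
import Mathlib

section
/- Injectivity Lemma. Let a multiplicative algebraic halving datum satisfy, in place of the degree condition (DC), only the weak degree condition (DC⁻): for every i and every x ∈ ℋ i the polynomial r (σ i x) has degree at most i. Assume there exists n ∈ ℕ such that: (i) ℋ i = 0 for all i > n; (ii) Poincaré duality holds: for every k ≤ n and every nonzero x ∈ ℋ k there exists y ∈ ℋ (n - k) with x * y ≠ 0; (iii) ℬ j = 0 for all j > n; and (iv) localization holds: for every a ∈ A with r a = 0 there exists N ∈ ℕ with u^N * a = 0. Then the datum satisfies the degree condition (DC): for every i and every nonzero x ∈ ℋ i one has κ i x ≠ 0. -/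
open Polynomial

/-- **Injectivity Lemma.** A multiplicative algebraic halving datum satisfying
only the weak degree condition (DC⁻), together with (i) vanishing of `ℋ i` for
`i > n`, (ii) Poincaré duality in formal dimension `n`, (iii) vanishing of
`ℬ j` for `j > n`, and (iv) localization for `r`, satisfies the degree
condition (DC): `κ i x := (r (σ i x)).coeff i` is nonzero for nonzero `x`. -/
theorem injectivity_lemma
    (R : Type) [Field R]
    (A : Type) [CommRing A] [Algebra R A]
    (𝒜 : ℕ → Submodule R A) [GradedAlgebra 𝒜]
    (u : A) (hu : u ∈ 𝒜 1)
    (B : Type) [CommRing B] [Algebra R B]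
    (ℬ : ℕ → Submodule R B) [GradedAlgebra ℬ]
    (H : Type) [CommRing H] [Algebra R H]
    (ℋ : ℕ → Submodule R H) [GradedAlgebra ℋ]
    (σ : ∀ i, ℋ i →ₗ[R] A)
    (hσ : ∀ i (x : ℋ i), σ i x ∈ 𝒜 (2 * i))
    (hLH : Function.Bijective
      (DirectSum.toModule R (ℕ × ℕ) A
        fun p => (LinearMap.mulRight R (u ^ p.2)).comp (σ p.1)))
    (ρ : A →ₐ[R] H)
    (hρ : ∀ i (x : ℋ i), ρ (σ i x) = (x : H))
    (r : A →ₐ[R] Polynomial B)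
    (hru : r u = Polynomial.X)
    (hrmem : ∀ n, ∀ a ∈ 𝒜 n, ∀ m, (r a).coeff m ∈ ℬ (n - m))
    (hrtop : ∀ n, ∀ a ∈ 𝒜 n, ∀ m, n < m → (r a).coeff m = 0)
    -- weak degree condition (DC⁻)
    (hDCminus : ∀ i (x : ℋ i), (r (σ i x)).degree ≤ (i : WithBot ℕ))
    (n : ℕ)
    -- (i) `ℋ i = 0` for `i > n`
    (hHtop : ∀ i, n < i → ℋ i = ⊥)
    -- (ii) Poincaré duality
    (hPD : ∀ k, k ≤ n → ∀ x ∈ ℋ k, x ≠ 0 → ∃ y ∈ ℋ (n - k), x * y ≠ 0)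
    -- (iii) `ℬ j = 0` for `j > n`
    (hBtop : ∀ j, n < j → ℬ j = ⊥)
    -- (iv) localization
    (hloc : ∀ a : A, r a = 0 → ∃ N : ℕ, u ^ N * a = 0) :
    ∀ i (x : ℋ i), (x : H) ≠ 0 → (r (σ i x)).coeff i ≠ 0 := by
  classical
  -- the Leray–Hirsch isomorphism
  set Φ : (DirectSum (ℕ × ℕ) fun p => ↥(ℋ p.1)) →ₗ[R] A :=
    DirectSum.toModule R (ℕ × ℕ) A
      fun p => (LinearMap.mulRight R (u ^ p.2)).comp (σ p.1) with hΦ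
  -- shift map on the direct sum
  set S : (DirectSum (ℕ × ℕ) fun p => ↥(ℋ p.1)) →ₗ[R] (DirectSum (ℕ × ℕ) fun p => ↥(ℋ p.1)) :=
    DirectSum.toModule R (ℕ × ℕ) _
      (fun p => DirectSum.lof R (ℕ × ℕ) (fun q => ℋ q.1) (p.1, p.2 + 1)) with hS
  -- left inverse of the shift
  set T : (DirectSum (ℕ × ℕ) fun p => ↥(ℋ p.1)) →ₗ[R] (DirectSum (ℕ × ℕ) fun p => ↥(ℋ p.1)) :=
    DirectSum.toModule R (ℕ × ℕ) _
      (fun p => (match p with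
        | (j, 0) => (0 : ℋ j →ₗ[R] (DirectSum (ℕ × ℕ) fun q => ↥(ℋ q.1)))
        | (j, m + 1) => DirectSum.lof R (ℕ × ℕ) (fun q => ℋ q.1) (j, m) :
          ℋ p.1 →ₗ[R] (DirectSum (ℕ × ℕ) fun q => ↥(ℋ q.1)))) with hT
  have hTS : ∀ w, T (S w) = w := by
    intro w
    induction w using DirectSum.induction_on with
    | zero => simp
    | of p c =>
      rcases p with ⟨j, m⟩
      rw [← DirectSum.lof_eq_of R]
      simp [S, T, DirectSum.toModule_lof]
    | add w₁ w₂ h₁ h₂ => simp [map_add, h₁, h₂]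
  have hΦS : ∀ w, u * Φ w = Φ (S w) := by
    intro w
    induction w using DirectSum.induction_on with
    | zero => simp
    | of p c =>
      rcases p with ⟨j, m⟩
      rw [← DirectSum.lof_eq_of R]
      simp only [S, Φ, DirectSum.toModule_lof, LinearMap.comp_apply,
        LinearMap.mulRight_apply]
      rw [pow_succ]; ring
    | add w₁ w₂ h₁ h₂ => rw [map_add, map_add, mul_add, h₁, h₂, map_add]
  have hu1 : ∀ b : A, u * b = 0 → b = 0 := by
    intro b hb
    obtain ⟨w, rfl⟩ := hLH.2 b
    have : Φ (S w) = Φ 0 := by rw [map_zero, ← hΦS]; exact hb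
    have hw0 : S w = 0 := hLH.1 this
    have := hTS w
    rw [hw0, map_zero] at this
    rw [← this, map_zero]
  have huN : ∀ (N : ℕ) (b : A), u ^ N * b = 0 → b = 0 := by
    intro N
    induction N with
    | zero => intro b hb; simpa using hb
    | succ N ih =>
      intro b hb
      apply hu1
      apply ih
      rw [← mul_assoc, ← pow_succ]; exact hb
  -- main argument
  intro i x hx hk
  have hin : i ≤ n := by
    by_contra h
    push_neg at h
    exact hx (Submodule.mem_bot R |>.mp ((hHtop i h).le x.2))
  obtain ⟨y, hy, hxy⟩ := hPD i hin (x : H) x.2 hx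
  set y' : ℋ (n - i) := ⟨y, hy⟩ with hy'
  set a : A := σ i x * σ (n - i) y' with hadef
  have ha : a ∈ 𝒜 (2 * n) := by
    have h1 := SetLike.mul_mem_graded (hσ i x) (hσ (n - i) y')
    have e : 2 * i + 2 * (n - i) = 2 * n := by omega
    rwa [e] at h1
  have hra : r a = 0 := by
    ext m
    simp only [coeff_zero]
    by_cases hm : m < n
    · have h1 := hrmem (2 * n) a ha m
      have h2 : n < 2 * n - m := by omega
      rw [hBtop _ h2] at h1
      simpa using h1
    · push_neg at hm
      rw [hadef, map_mul, coeff_mul]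
      apply Finset.sum_eq_zero
      rintro ⟨s, t⟩ hst
      rw [Finset.HasAntidiagonal.mem_antidiagonal] at hst
      by_cases hs : s < i
      · have ht : (n - i : ℕ) < t := by omega
        have hq : (r (σ (n - i) y')).coeff t = 0 :=
          coeff_eq_zero_of_degree_lt
            (lt_of_le_of_lt (hDCminus _ y') (by exact_mod_cast ht))
        simp [hq]
      · push_neg at hs
        rcases eq_or_lt_of_le hs with h | h
        · rw [← h]
          simp [hk]
        · have hp : (r (σ i x)).coeff s = 0 :=
            coeff_eq_zero_of_degree_lt
              (lt_of_le_of_lt (hDCminus _ x) (by exact_mod_cast h))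
          simp [hp]
  obtain ⟨N, hN⟩ := hloc a hra
  have ha0 : a = 0 := huN N a hN
  have : ρ a = (x : H) * y := by
    rw [hadef, map_mul, hρ, hρ]
  rw [ha0, map_zero] at this
  exact hxy this.symm
end

section
/- If the eigenvalues of a complex matrix are distinct and contain no complex conjugate pairs, then the eigenvalues of the matrix viewed as a real linear map are also distinct: for every n ∈ ℕ and A ∈ Matrix (Fin n) (Fin n) ℂ, if A.charpoly is squarefree (A has n distinct complex eigenvalues) and for all complex roots λ, μ of A.charpoly one has λ ≠ conj μ, then the characteristic polynomial of the realification ℜ(A), mapped to ℂ[X] via algebraMap ℝ ℂ, is squarefree; i.e., ℜ(A) has 2n distinct complex eigenvalues. -/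
open Matrix Polynomial

private lemma charpoly_similar_aux {m : Type*} [Fintype m] [DecidableEq m]
    (P M Q : Matrix m m ℂ) (hPQ : P * Q = 1) :
    (P * M * Q).charpoly = M.charpoly := by
  have key : charmatrix (P * M * Q) = (P.map C) * charmatrix M * (Q.map C) := by
    unfold charmatrix
    rw [RingHom.mapMatrix_apply, Matrix.map_mul, Matrix.map_mul]
    have h1 : (P.map C) * (scalar m (X : ℂ[X]) - (C : ℂ →+* ℂ[X]).mapMatrix M) * (Q.map C)
        = (P.map C) * scalar m (X : ℂ[X]) * (Q.map C) - (P.map C) * (M.map C) * (Q.map C) := by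
      rw [RingHom.mapMatrix_apply, mul_sub, sub_mul]
    rw [h1]
    congr 1
    have hcomm : (P.map C) * scalar m (X : ℂ[X]) = scalar m (X : ℂ[X]) * (P.map C) :=
      (scalar_commute (X : ℂ[X]) (Commute.all _) _).symm
    rw [hcomm, mul_assoc, ← Matrix.map_mul, hPQ]
    simp
  have hdet : (P.map C) * (Q.map C) = 1 := by rw [← Matrix.map_mul, hPQ]; simp
  rw [Matrix.charpoly, key, det_mul, det_mul, mul_comm ((P.map C).det) _, mul_assoc,
    ← det_mul, hdet, det_one, mul_one, Matrix.charpoly]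

private lemma isRoot_map_conj_iff (p : ℂ[X]) (z : ℂ) :
    (p.map (starRingEnd ℂ)).IsRoot z ↔ p.IsRoot ((starRingEnd ℂ) z) := by
  conv_lhs => rw [IsRoot, show z = (starRingEnd ℂ) ((starRingEnd ℂ) z) from (Complex.conj_conj z).symm,
    eval_map, eval₂_at_apply]
  rw [map_eq_zero_iff _ (starRingEnd ℂ).injective]
  rfl

/-- If the eigenvalues of a complex matrix are distinct (its characteristic
polynomial is squarefree) and contain no complex conjugate pairs, then the
eigenvalues of the matrix viewed as a real linear map are also distinct:
the characteristic polynomial of the realification, viewed in `ℂ[X]`, is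
squarefree. -/
theorem realification_charpoly_squarefree
    (n : ℕ) (A : Matrix (Fin n) (Fin n) ℂ)
    (h1 : Squarefree A.charpoly)
    (h2 : ∀ l m : ℂ, A.charpoly.IsRoot l → A.charpoly.IsRoot m →
      l ≠ (starRingEnd ℂ) m) :
    Squarefree
      (((Matrix.fromBlocks (A.map Complex.re) (-(A.map Complex.im))
          (A.map Complex.im) (A.map Complex.re)).charpoly).map (algebraMap ℝ ℂ)) := by
  set ι := algebraMap ℝ ℂ
  set B := A.map (starRingEnd ℂ) with hB
  set S : Matrix (Fin n ⊕ Fin n) (Fin n ⊕ Fin n) ℂ :=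
    fromBlocks 1 1 (Complex.I • 1) ((-Complex.I) • 1) with hS
  set T : Matrix (Fin n ⊕ Fin n) (Fin n ⊕ Fin n) ℂ :=
    fromBlocks ((2:ℂ)⁻¹ • 1) ((-(Complex.I)/2) • 1) ((2:ℂ)⁻¹ • 1) ((Complex.I/2) • 1) with hT
  have hST : S * T = 1 := by
    rw [hS, hT, fromBlocks_multiply]
    ext (i|i) (j|j) <;> by_cases h : i = j <;>
      simp [h, Matrix.one_apply, Matrix.smul_mul, Matrix.mul_smul, smul_smul] <;>
      ring_nf <;> simp [Complex.I_sq]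
  have hM : (Matrix.fromBlocks (A.map Complex.re) (-(A.map Complex.im))
          (A.map Complex.im) (A.map Complex.re)).map ι = S * (fromBlocks B 0 0 A) * T := by
    rw [hS, hT, fromBlocks_multiply, fromBlocks_multiply]
    ext (i|i) (j|j) <;>
      simp [fromBlocks, hB, ι, Matrix.smul_mul, Matrix.mul_smul, smul_smul,
        Complex.ext_iff, Complex.div_re, Complex.div_im, Complex.normSq] <;>
      (try ring) <;> exact ⟨trivial, trivial⟩
  have hchar : ((Matrix.fromBlocks (A.map Complex.re) (-(A.map Complex.im))
          (A.map Complex.im) (A.map Complex.re)).charpoly).map ι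
      = (A.charpoly.map (starRingEnd ℂ)) * A.charpoly := by
    rw [← Matrix.charpoly_map, hM, charpoly_similar_aux _ _ _ hST,
      Matrix.charpoly_fromBlocks_zero₂₁, hB, Matrix.charpoly_map]
  rw [hchar]
  have hq0 : A.charpoly ≠ 0 := h1.ne_zero
  have hsf2 : Squarefree (A.charpoly.map (starRingEnd ℂ)) := by
    intro x hx
    have hdvd : (x.map (starRingEnd ℂ)) * (x.map (starRingEnd ℂ)) ∣ A.charpoly := by
      have := _root_.map_dvd (mapRingHom (starRingEnd ℂ)) hx
      simpa [Polynomial.map_map, Function.comp] using this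
    have hu := h1 _ hdvd
    have : IsUnit ((x.map (starRingEnd ℂ)).map (starRingEnd ℂ)) := hu.map (mapRingHom (starRingEnd ℂ))
    simpa [Polynomial.map_map, Function.comp] using this
  refine squarefree_mul_iff.mpr ⟨?_, hsf2, h1⟩
  intro d hd1 hd2
  by_contra hu
  obtain ⟨z, hz⟩ := IsAlgClosed.exists_root (k := ℂ) d
    (fun hdeg => hu (Polynomial.isUnit_iff_degree_eq_zero.mpr hdeg))
  have hz1 : A.charpoly.IsRoot ((starRingEnd ℂ) z) :=
    (isRoot_map_conj_iff _ _).mp (hz.dvd hd1)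
  have hz2 : A.charpoly.IsRoot z := hz.dvd hd2
  exact h2 _ _ hz1 hz2 rfl
end

section
/- The eigenvalues of a quaternionic linear map viewed as a real linear map come in fours (λ, λ, conj λ, conj λ): for every n ∈ ℕ and all A, B ∈ Matrix (Fin n) (Fin n) ℂ, let M = fromBlocks A B (-(B.map (starRingEnd ℂ))) (A.map (starRingEnd ℂ)) be the associated quaternionic block matrix and ℜ(M) its realification (a real matrix indexed by (Fin n ⊕ Fin n) ⊕ (Fin n ⊕ Fin n)). Then (ℜ(M).charpoly).map (algebraMap ℝ ℂ) = (M.charpoly)^2. -/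
open Matrix Polynomial

/-- Characteristic polynomial is invariant under conjugation by a unit. -/
lemma charpoly_units_conj_aux {m R : Type*} [Fintype m] [DecidableEq m] [CommRing R]
    (u : (Matrix m m R)ˣ) (M : Matrix m m R) :
    ((u : Matrix m m R) * M * (↑u⁻¹ : Matrix m m R)).charpoly = M.charpoly := by
  let v : (Matrix m m R[X])ˣ :=
    Units.map ((C : R →+* R[X]).mapMatrix.toMonoidHom : Matrix m m R →* Matrix m m R[X]) u
  have hvu : (v : Matrix m m R[X]) = ((C : R →+* R[X]).mapMatrix (u : Matrix m m R)) := rfl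
  have hvi : (↑v⁻¹ : Matrix m m R[X]) = ((C : R →+* R[X]).mapMatrix (↑u⁻¹ : Matrix m m R)) := rfl
  have hchar : Matrix.charmatrix ((u : Matrix m m R) * M * (↑u⁻¹ : Matrix m m R))
      = (v : Matrix m m R[X]) * Matrix.charmatrix M * (↑v⁻¹ : Matrix m m R[X]) := by
    have hscal : (v : Matrix m m R[X]) * Matrix.scalar m (X : R[X])
        * (↑v⁻¹ : Matrix m m R[X]) = Matrix.scalar m (X : R[X]) := by
      have hc := (Matrix.scalar_commute (X : R[X]) (fun r' => Commute.all _ _)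
        (v : Matrix m m R[X])).symm
      rw [hc, mul_assoc, v.mul_inv, mul_one]
    show Matrix.scalar m (X : R[X])
        - (C : R →+* R[X]).mapMatrix ((u : Matrix m m R) * M * (↑u⁻¹ : Matrix m m R))
      = (v : Matrix m m R[X]) * (Matrix.scalar m (X : R[X])
          - (C : R →+* R[X]).mapMatrix M) * (↑v⁻¹ : Matrix m m R[X])
    rw [_root_.map_mul, _root_.map_mul, mul_sub, sub_mul, hscal, hvu, hvi]
  unfold Matrix.charpoly
  rw [hchar, Matrix.det_mul, Matrix.det_mul]
  have h1 : (v : Matrix m m R[X]).det * (↑v⁻¹ : Matrix m m R[X]).det = 1 := by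
    rw [← Matrix.det_mul, v.mul_inv, Matrix.det_one]
  calc (v : Matrix m m R[X]).det * (Matrix.charmatrix M).det * (↑v⁻¹ : Matrix m m R[X]).det
      = (Matrix.charmatrix M).det
        * ((v : Matrix m m R[X]).det * (↑v⁻¹ : Matrix m m R[X]).det) := by ring
    _ = (Matrix.charmatrix M).det := by rw [h1, mul_one]

/-- The eigenvalues of a quaternionic linear map viewed as a real linear map
come in fours `(λ, λ, conj λ, conj λ)`: the characteristic polynomial of the
realification of the quaternionic block matrix
`M = [[A, B], [-conj B, conj A]]` is the square of the characteristic
polynomial of `M` (whose roots already come in conjugate pairs). -/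
theorem realification_quaternionic_charpoly_sq
    (n : ℕ) (A B : Matrix (Fin n) (Fin n) ℂ) :
    ∀ M : Matrix (Fin n ⊕ Fin n) (Fin n ⊕ Fin n) ℂ,
      M = Matrix.fromBlocks A B (-(B.map (starRingEnd ℂ))) (A.map (starRingEnd ℂ)) →
      ((Matrix.fromBlocks (M.map Complex.re) (-(M.map Complex.im))
          (M.map Complex.im) (M.map Complex.re)).charpoly).map (algebraMap ℝ ℂ) =
        M.charpoly ^ 2 := by
  intro M hM
  set Mb : Matrix (Fin n ⊕ Fin n) (Fin n ⊕ Fin n) ℂ := M.map (starRingEnd ℂ) with hMb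
  set X : Matrix (Fin n ⊕ Fin n) (Fin n ⊕ Fin n) ℂ := M.map (fun z => (z.re : ℂ)) with hX
  set Y : Matrix (Fin n ⊕ Fin n) (Fin n ⊕ Fin n) ℂ := M.map (fun z => (z.im : ℂ)) with hY
  -- Step 1: push the map inside
  rw [← Matrix.charpoly_map]
  have hmap : (Matrix.fromBlocks (M.map Complex.re) (-(M.map Complex.im))
      (M.map Complex.im) (M.map Complex.re)).map (algebraMap ℝ ℂ)
      = Matrix.fromBlocks X (-Y) Y X := by
    ext (i|i) (j|j) <;> simp [Matrix.fromBlocks, hX, hY]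
  rw [hmap]
  -- Step 2: similarity to fromBlocks Mb 0 0 M
  set P : Matrix ((Fin n ⊕ Fin n) ⊕ (Fin n ⊕ Fin n)) ((Fin n ⊕ Fin n) ⊕ (Fin n ⊕ Fin n)) ℂ :=
    Matrix.fromBlocks 1 1 (Complex.I • 1) (-(Complex.I • 1)) with hP
  set Q : Matrix ((Fin n ⊕ Fin n) ⊕ (Fin n ⊕ Fin n)) ((Fin n ⊕ Fin n) ⊕ (Fin n ⊕ Fin n)) ℂ :=
    Matrix.fromBlocks (((1:ℂ)/2) • 1) (((-Complex.I)/2) • 1) (((1:ℂ)/2) • 1)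
      ((Complex.I/2) • 1) with hQ
  have hPQ : P * Q = 1 := by
    rw [hP, hQ, Matrix.fromBlocks_multiply]
    conv_rhs => rw [← Matrix.fromBlocks_one]
    refine Matrix.fromBlocks_inj.mpr ⟨?_, ?_, ?_, ?_⟩ <;>
      · simp only [Matrix.one_mul, Matrix.mul_one, Matrix.smul_mul, Matrix.mul_smul,
          Matrix.neg_mul, Matrix.mul_neg, smul_smul, one_mul, mul_one, ← neg_smul, ← add_smul]
        ext i j
        by_cases h : i = j <;>
          simp [Matrix.one_apply, h] <;> ring_nf <;> simp [Complex.I_sq] <;> norm_num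
  have hQP : Q * P = 1 := by
    rw [hP, hQ, Matrix.fromBlocks_multiply]
    conv_rhs => rw [← Matrix.fromBlocks_one]
    refine Matrix.fromBlocks_inj.mpr ⟨?_, ?_, ?_, ?_⟩ <;>
      · simp only [Matrix.one_mul, Matrix.mul_one, Matrix.smul_mul, Matrix.mul_smul,
          Matrix.neg_mul, Matrix.mul_neg, smul_smul, one_mul, mul_one, ← neg_smul, ← add_smul]
        ext i j
        by_cases h : i = j <;>
          simp [Matrix.one_apply, h] <;> ring_nf <;> simp [Complex.I_sq] <;> norm_num
  set u : (Matrix ((Fin n ⊕ Fin n) ⊕ (Fin n ⊕ Fin n)) ((Fin n ⊕ Fin n) ⊕ (Fin n ⊕ Fin n)) ℂ)ˣ :=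
    ⟨P, Q, hPQ, hQP⟩ with hu
  have hsim : Matrix.fromBlocks X (-Y) Y X = P * Matrix.fromBlocks Mb 0 0 M * Q := by
    rw [hP, hQ, Matrix.fromBlocks_multiply, Matrix.fromBlocks_multiply]
    refine Matrix.fromBlocks_inj.mpr ⟨?_, ?_, ?_, ?_⟩ <;>
      · simp only [Matrix.one_mul, Matrix.mul_one, Matrix.smul_mul, Matrix.mul_smul,
          Matrix.neg_mul, Matrix.mul_neg, Matrix.mul_zero, Matrix.zero_mul,
          add_zero, zero_add, smul_smul, neg_zero, smul_zero]
        ext i j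
        simp only [Matrix.add_apply, Matrix.smul_apply, Matrix.neg_apply, hX, hY, hMb,
          Matrix.map_apply, smul_eq_mul, Complex.star_def]
        set z := M i j
        apply Complex.ext <;> simp <;> ring
  rw [hsim]
  have hcu := charpoly_units_conj_aux u (Matrix.fromBlocks Mb 0 0 M)
  rw [show (↑u : Matrix _ _ ℂ) = P from rfl,
    show (↑u⁻¹ : Matrix ((Fin n ⊕ Fin n) ⊕ (Fin n ⊕ Fin n))
      ((Fin n ⊕ Fin n) ⊕ (Fin n ⊕ Fin n)) ℂ) = Q from rfl] at hcu
  rw [hcu, Matrix.charpoly_fromBlocks_zero₁₂]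
  -- Step 3: Mb is similar to M
  set J : Matrix (Fin n ⊕ Fin n) (Fin n ⊕ Fin n) ℂ := Matrix.fromBlocks 0 1 (-1) 0 with hJ
  set K : Matrix (Fin n ⊕ Fin n) (Fin n ⊕ Fin n) ℂ := Matrix.fromBlocks 0 (-1) 1 0 with hK
  have hJK : J * K = 1 := by
    rw [hJ, hK, Matrix.fromBlocks_multiply]
    conv_rhs => rw [← Matrix.fromBlocks_one]
    refine Matrix.fromBlocks_inj.mpr ⟨?_, ?_, ?_, ?_⟩ <;> simp
  have hKJ : K * J = 1 := by
    rw [hJ, hK, Matrix.fromBlocks_multiply]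
    conv_rhs => rw [← Matrix.fromBlocks_one]
    refine Matrix.fromBlocks_inj.mpr ⟨?_, ?_, ?_, ?_⟩ <;> simp
  set w : (Matrix (Fin n ⊕ Fin n) (Fin n ⊕ Fin n) ℂ)ˣ := ⟨J, K, hJK, hKJ⟩ with hw
  have hMbJ : Mb = J * M * K := by
    rw [hMb, hM, hJ, hK, Matrix.fromBlocks_multiply, Matrix.fromBlocks_multiply]
    ext (i|i) (j|j) <;>
      simp [Matrix.fromBlocks, Matrix.map_apply, Complex.star_def]
  have hcw := charpoly_units_conj_aux w M
  rw [show (↑w : Matrix _ _ ℂ) = J from rfl,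
    show (↑w⁻¹ : Matrix (Fin n ⊕ Fin n) (Fin n ⊕ Fin n) ℂ) = K from rfl] at hcw
  rw [hMbJ, hcw, sq]
end
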